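/- In an associative ℚ(q)-algebra, let F_b, F_{b'}, F_{b''}, E, K be elements with [E,F_b]=0, [E,F_{b'}] = −q^{-1/2}K·F_{b''}, F_bK = q^{-1}K F_b, and F_bF_{b''}=F_{b''}F_b. Set F_β := −q^{1/2}F_bF_{b'} + q^{-1/2}F_{b'}F_b. Then [E,F_β]=0. -/

import Mathlib

/-- Case α < β (α a strict subinterval of β) of the quantum double relation: the
lowering operator of β = b ⊕ b' commutes with E = E_α, where b' = α ⊕ b''. Here v
plays the role of q^{1/2} (q = v^2) and K of K_α. -/
theorem stmt15 {F A : Type*} [Field F] [Ring A] [Algebra F A]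
    (v : F) (hv : v ≠ 0)
    (Fb Fb' Fb'' E K Fβ : A)
    (h1 : E * Fb = Fb * E)
    (h2 : E * Fb' - Fb' * E = -(v⁻¹ • (K * Fb'')))
    (h3 : Fb * K = (v ^ 2)⁻¹ • (K * Fb))
    (h4 : Fb * Fb'' = Fb'' * Fb)
    (hβ : Fβ = -(v • (Fb * Fb')) + v⁻¹ • (Fb' * Fb)) :
    E * Fβ = Fβ * E := by
  have h2' : E * Fb' = Fb' * E - v⁻¹ • (K * Fb'') := by
    have := sub_eq_iff_eq_add.mp h2
    rw [this, neg_add_eq_sub]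
  subst hβ
  have key1 : E * (Fb * Fb') = Fb * Fb' * E - (v⁻¹ * (v ^ 2)⁻¹) • (K * (Fb'' * Fb)) := by
    rw [← mul_assoc, h1, mul_assoc, h2', mul_sub, ← mul_assoc, mul_smul_comm, ← mul_assoc,
      h3, smul_mul_assoc, mul_assoc, mul_assoc, h4, smul_smul]
  have key2 : E * (Fb' * Fb) = Fb' * Fb * E - v⁻¹ • (K * (Fb'' * Fb)) := by
    rw [← mul_assoc, h2', sub_mul, smul_mul_assoc, mul_assoc, mul_assoc, h1, ← mul_assoc Fb' Fb E]
  have hs : v * (v⁻¹ * (v ^ 2)⁻¹) = v⁻¹ * v⁻¹ := by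
    field_simp
  rw [mul_add, mul_neg, mul_smul_comm, mul_smul_comm, key1, key2,
    add_mul, neg_mul, smul_mul_assoc, smul_mul_assoc]
  rw [smul_sub, smul_sub, smul_smul, smul_smul, hs]
  abel
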